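/- Let 0<q<1 and let x and y be complex numbers with |x| < 1 and |y| < 1. Then Σ_{n>r>0} ζ[n] x^{n-r-1} y^{r-1} = Σ_{m=1}^∞ q^m/(([m]_q − x q^m)([m]_q − y q^m)), where the left-hand sum is over all pairs of integers n > r > 0 and both series converge absolutely. -/

import Mathlib

set_option maxHeartbeats 1000000

/-- The `q`-analog of a natural number: `[k]_q = (1-q^k)/(1-q)`. -/
noncomputable def qnum (q : ℝ) (k : ℕ) : ℝ := (1 - q ^ k) / (1 - q)

/-- The single `q`-zeta value `ζ[n] = Σ_{k≥1} q^{(n-1)k}/[k]_q^n`. -/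
noncomputable def qzeta (q : ℝ) (n : ℕ) : ℝ :=
  ∑' k : ℕ, q ^ ((n - 1) * (k + 1)) / (qnum q (k + 1)) ^ n

/-- The triple-indexed term `q^{(s+r+1)(k+1)} x^s y^r / [k+1]^{s+r+2}`. -/
noncomputable def Fterm (q : ℝ) (x y : ℂ) (z : (ℕ × ℕ) × ℕ) : ℂ :=
  (q : ℂ) ^ ((z.1.1 + z.1.2 + 1) * (z.2 + 1)) * x ^ z.1.1 * y ^ z.1.2 /
    ((qnum q (z.2 + 1) : ℝ) : ℂ) ^ (z.1.1 + z.1.2 + 2)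

lemma qnum_one_le {q : ℝ} (hq0 : 0 < q) (hq1 : q < 1) (k : ℕ) :
    1 ≤ qnum q (k + 1) := by
  have h : q ^ (k + 1) ≤ q := by
    simpa using pow_le_pow_of_le_one hq0.le hq1.le (show 1 ≤ k + 1 by omega)
  unfold qnum
  rw [le_div_iff₀ (by linarith), one_mul]
  linarith

lemma qnum_denom_ne {q : ℝ} (hq0 : 0 < q) (hq1 : q < 1) {z : ℂ}
    (hz : ‖z‖ < 1) (k : ℕ) :
    ((qnum q (k + 1) : ℝ) : ℂ) - z * (q : ℂ) ^ (k + 1) ≠ 0 := by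
  have hQ1 := qnum_one_le hq0 hq1 k
  intro h
  rw [sub_eq_zero] at h
  have habs := congrArg (‖·‖) h
  simp only [Complex.norm_real, norm_mul, norm_pow, Real.norm_eq_abs,
    abs_of_nonneg hq0.le, abs_of_nonneg (show (0:ℝ) ≤ qnum q (k + 1) by linarith)] at habs
  have hqk : q ^ (k + 1) ≤ 1 := pow_le_one₀ hq0.le hq1.le
  have hle : ‖z‖ * q ^ (k + 1) ≤ ‖z‖ :=
    mul_le_of_le_one_right (norm_nonneg z) hqk
  linarith

theorem q_diagonal_height (q : ℝ) (hq0 : 0 < q) (hq1 : q < 1)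
    (x y : ℂ) (hx : ‖x‖ < 1) (hy : ‖y‖ < 1) :
    Summable (fun p : {p : ℕ × ℕ // p.2 < p.1 ∧ 0 < p.2} =>
        (qzeta q p.1.1 : ℂ) * x ^ (p.1.1 - p.1.2 - 1) * y ^ (p.1.2 - 1)) ∧
    Summable (fun m : ℕ => (q : ℂ) ^ (m + 1) /
        (((qnum q (m + 1) : ℂ) - x * (q : ℂ) ^ (m + 1)) *
          ((qnum q (m + 1) : ℂ) - y * (q : ℂ) ^ (m + 1)))) ∧
    (∑' p : {p : ℕ × ℕ // p.2 < p.1 ∧ 0 < p.2},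
        (qzeta q p.1.1 : ℂ) * x ^ (p.1.1 - p.1.2 - 1) * y ^ (p.1.2 - 1))
      = ∑' m : ℕ, (q : ℂ) ^ (m + 1) /
          (((qnum q (m + 1) : ℂ) - x * (q : ℂ) ^ (m + 1)) *
            ((qnum q (m + 1) : ℂ) - y * (q : ℂ) ^ (m + 1))) := by
  have hQ1 : ∀ k : ℕ, 1 ≤ qnum q (k + 1) := qnum_one_le hq0 hq1
  have hQpos : ∀ k : ℕ, 0 < qnum q (k + 1) := fun k => lt_of_lt_of_le one_pos (hQ1 k)
  have hQne : ∀ k : ℕ, ((qnum q (k + 1) : ℝ) : ℂ) ≠ 0 := by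
    intro k
    exact_mod_cast Complex.ofReal_ne_zero.mpr (ne_of_gt (hQpos k))
  -- Norm of Fterm
  have hnorm : ∀ z : (ℕ × ℕ) × ℕ, ‖Fterm q x y z‖ =
      q ^ ((z.1.1 + z.1.2 + 1) * (z.2 + 1)) * ‖x‖ ^ z.1.1 * ‖y‖ ^ z.1.2 /
        (qnum q (z.2 + 1)) ^ (z.1.1 + z.1.2 + 2) := by
    intro z
    simp only [Fterm, norm_div, norm_mul, norm_pow, Complex.norm_real, Real.norm_eq_abs,
      abs_of_nonneg hq0.le, abs_of_nonneg (hQpos z.2).le]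
  -- Summability of Fterm
  have hmaj : Summable (fun z : (ℕ × ℕ) × ℕ => (‖x‖ ^ z.1.1 * ‖y‖ ^ z.1.2) * q ^ (z.2 + 1)) := by
    have h1 : Summable (fun p : ℕ × ℕ => ‖x‖ ^ p.1 * ‖y‖ ^ p.2) :=
      Summable.mul_of_nonneg (summable_geometric_of_lt_one (norm_nonneg x) hx)
        (summable_geometric_of_lt_one (norm_nonneg y) hy)
        (fun _ => pow_nonneg (norm_nonneg x) _) (fun _ => pow_nonneg (norm_nonneg y) _)
    have h2 : Summable (fun k : ℕ => q ^ (k + 1)) := by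
      have := (summable_geometric_of_lt_one hq0.le hq1).mul_left q
      exact this.congr (fun k => by rw [pow_succ]; ring)
    exact Summable.mul_of_nonneg h1 h2
      (fun p => mul_nonneg (pow_nonneg (norm_nonneg x) _) (pow_nonneg (norm_nonneg y) _))
      (fun k => pow_nonneg hq0.le _)
  have hFnorm : Summable (fun z : (ℕ × ℕ) × ℕ => ‖Fterm q x y z‖) := by
    apply hmaj.of_nonneg_of_le (fun z => norm_nonneg _)
    intro z
    rw [hnorm z]
    have h1 : q ^ ((z.1.1 + z.1.2 + 1) * (z.2 + 1)) ≤ q ^ (z.2 + 1) :=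
      pow_le_pow_of_le_one hq0.le hq1.le (Nat.le_mul_of_pos_left _ (by omega))
    have h2 : (1 : ℝ) ≤ (qnum q (z.2 + 1)) ^ (z.1.1 + z.1.2 + 2) :=
      one_le_pow₀ (hQ1 z.2)
    calc q ^ ((z.1.1 + z.1.2 + 1) * (z.2 + 1)) * ‖x‖ ^ z.1.1 * ‖y‖ ^ z.1.2 /
          (qnum q (z.2 + 1)) ^ (z.1.1 + z.1.2 + 2)
        ≤ q ^ (z.2 + 1) * ‖x‖ ^ z.1.1 * ‖y‖ ^ z.1.2 / 1 := by
          apply div_le_div₀ (by positivity) ?_ one_pos h2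
          gcongr
      _ = (‖x‖ ^ z.1.1 * ‖y‖ ^ z.1.2) * q ^ (z.2 + 1) := by ring
  have hF : Summable (Fterm q x y) := hFnorm.of_norm
  -- the inner-k sum equals the qzeta term
  have hzsum : ∀ s r : ℕ, Summable (fun k : ℕ =>
      q ^ ((s + r + 1) * (k + 1)) / (qnum q (k + 1)) ^ (s + r + 2)) := by
    intro s r
    have h2 : Summable (fun k : ℕ => q ^ (k + 1)) := by
      have := (summable_geometric_of_lt_one hq0.le hq1).mul_left q
      exact this.congr (fun k => by rw [pow_succ]; ring)
    apply h2.of_nonneg_of_le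
      (fun k => div_nonneg (pow_nonneg hq0.le _) (pow_nonneg (hQpos k).le _))
    intro k
    have h1 : q ^ ((s + r + 1) * (k + 1)) ≤ q ^ (k + 1) :=
      pow_le_pow_of_le_one hq0.le hq1.le (Nat.le_mul_of_pos_left _ (by omega))
    have h2 : (1 : ℝ) ≤ (qnum q (k + 1)) ^ (s + r + 2) := one_le_pow₀ (hQ1 k)
    calc q ^ ((s + r + 1) * (k + 1)) / (qnum q (k + 1)) ^ (s + r + 2)
        ≤ q ^ (k + 1) / 1 := div_le_div₀ (pow_nonneg hq0.le _) h1 one_pos h2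
      _ = q ^ (k + 1) := div_one _
  have hG : ∀ s r : ℕ, (qzeta q (s + r + 2) : ℂ) * x ^ s * y ^ r =
      ∑' k : ℕ, Fterm q x y ((s, r), k) := by
    intro s r
    unfold qzeta Fterm
    have hn : s + r + 2 - 1 = s + r + 1 := rfl
    simp only [hn]
    rw [Complex.ofReal_tsum, ← tsum_mul_right, ← tsum_mul_right]
    apply tsum_congr
    intro k
    push_cast
    ring
  -- the equivalence for the LHS index set
  let e : ℕ × ℕ ≃ {p : ℕ × ℕ // p.2 < p.1 ∧ 0 < p.2} :=
  { toFun := fun p => ⟨(p.1 + p.2 + 2, p.2 + 1), by omega⟩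
    invFun := fun p => (p.1.1 - p.1.2 - 1, p.1.2 - 1)
    left_inv := fun p => by
      obtain ⟨s, r⟩ := p
      simp only [Prod.mk.injEq]
      omega
    right_inv := fun p => by
      obtain ⟨⟨n, r⟩, h1, h2⟩ := p
      apply Subtype.ext
      simp only [Prod.mk.injEq]
      omega }
  have hcomp : ∀ p : ℕ × ℕ,
      ((fun p : {p : ℕ × ℕ // p.2 < p.1 ∧ 0 < p.2} =>
        (qzeta q p.1.1 : ℂ) * x ^ (p.1.1 - p.1.2 - 1) * y ^ (p.1.2 - 1)) (e p))
      = ∑' k : ℕ, Fterm q x y (p, k) := by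
    intro ⟨s, r⟩
    have h1 : s + r + 2 - (r + 1) - 1 = s := by omega
    have h2 : r + 1 - 1 = r := by omega
    simp only [e, Equiv.coe_fn_mk, h1, h2]
    exact hG s r
  -- Summability of LHS
  have hL : Summable (fun p : {p : ℕ × ℕ // p.2 < p.1 ∧ 0 < p.2} =>
      (qzeta q p.1.1 : ℂ) * x ^ (p.1.1 - p.1.2 - 1) * y ^ (p.1.2 - 1)) := by
    rw [← e.summable_iff]
    exact (hF.prod).congr (fun p => (hcomp p).symm)
  -- the geometric computation for fixed k
  have hAB : ∀ k : ℕ, (∑' p : ℕ × ℕ, Fterm q x y (p, k)) =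
      (q : ℂ) ^ (k + 1) /
        ((((qnum q (k + 1) : ℝ) : ℂ) - x * (q : ℂ) ^ (k + 1)) *
          (((qnum q (k + 1) : ℝ) : ℂ) - y * (q : ℂ) ^ (k + 1))) := by
    intro k
    set Q : ℂ := ((qnum q (k + 1) : ℝ) : ℂ) with hQ
    set c : ℂ := (q : ℂ) ^ (k + 1) with hc
    have hQne' : Q ≠ 0 := hQne k
    have hcnorm : ‖c‖ = q ^ (k + 1) := by
      rw [hc, norm_pow, Complex.norm_real, Real.norm_eq_abs, abs_of_nonneg hq0.le]
    have hQnorm : ‖Q‖ = qnum q (k + 1) := by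
      rw [hQ, Complex.norm_real, Real.norm_eq_abs, abs_of_nonneg (hQpos k).le]
    have hfrac : ∀ z : ℂ, ‖z‖ < 1 → ‖z * c / Q‖ < 1 := by
      intro z hz
      rw [norm_div, norm_mul, hcnorm, hQnorm, div_lt_one (hQpos k)]
      have hle : ‖z‖ * q ^ (k + 1) ≤ ‖z‖ :=
        mul_le_of_le_one_right (norm_nonneg z) (pow_le_one₀ hq0.le hq1.le)
      have hz' : ‖z‖ < 1 := by exact hz
      linarith [hQ1 k]
    have hxlt : ‖x * c / Q‖ < 1 := hfrac x hx
    have hylt : ‖y * c / Q‖ < 1 := hfrac y hy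
    have hfac : ∀ p : ℕ × ℕ, Fterm q x y (p, k) =
        (c / Q * (x * c / Q) ^ p.1) * (1 / Q * (y * c / Q) ^ p.2) := by
      intro ⟨s, r⟩
      unfold Fterm
      simp only
      rw [mul_comm (s + r + 1) (k + 1), pow_mul, ← hc, ← hQ]
      rw [div_pow, div_pow, mul_pow, mul_pow]
      field_simp
      ring
    have hsumA : Summable (fun s : ℕ => ‖c / Q * (x * c / Q) ^ s‖) := by
      simp only [norm_mul, norm_pow]
      exact (summable_geometric_of_lt_one (norm_nonneg _) hxlt).mul_left _
    have hsumB : Summable (fun r : ℕ => ‖1 / Q * (y * c / Q) ^ r‖) := by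
      simp only [norm_mul, norm_pow]
      exact (summable_geometric_of_lt_one (norm_nonneg _) hylt).mul_left _
    have hD1 : Q - x * c ≠ 0 := qnum_denom_ne hq0 hq1 hx k
    have hD2 : Q - y * c ≠ 0 := qnum_denom_ne hq0 hq1 hy k
    have eA : (∑' s : ℕ, c / Q * (x * c / Q) ^ s) = c / (Q - x * c) := by
      rw [tsum_mul_left, tsum_geometric_of_norm_lt_one hxlt]
      rw [show (1 : ℂ) - x * c / Q = (Q - x * c) / Q by field_simp, inv_div,
        div_mul_div_comm, mul_comm c Q, mul_div_mul_left _ _ hQne']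
    have eB : (∑' r : ℕ, 1 / Q * (y * c / Q) ^ r) = 1 / (Q - y * c) := by
      rw [tsum_mul_left, tsum_geometric_of_norm_lt_one hylt]
      rw [show (1 : ℂ) - y * c / Q = (Q - y * c) / Q by field_simp, inv_div,
        div_mul_div_comm, one_mul, div_mul_eq_div_div, div_self hQne', one_div]
    calc (∑' p : ℕ × ℕ, Fterm q x y (p, k))
        = ∑' p : ℕ × ℕ, (c / Q * (x * c / Q) ^ p.1) * (1 / Q * (y * c / Q) ^ p.2) :=
          tsum_congr hfac
      _ = (∑' s : ℕ, c / Q * (x * c / Q) ^ s) * (∑' r : ℕ, 1 / Q * (y * c / Q) ^ r) :=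
          (tsum_mul_tsum_of_summable_norm hsumA hsumB).symm
      _ = c / (Q - x * c) * (1 / (Q - y * c)) := by rw [eA, eB]
      _ = c / ((Q - x * c) * (Q - y * c)) := by
          rw [div_mul_div_comm, mul_one]
  have hswap : Summable (fun z : ℕ × (ℕ × ℕ) => Fterm q x y (z.2, z.1)) := by
    have := hF.prod_symm
    exact this.congr (fun z => rfl)
  have hR : Summable (fun m : ℕ => (q : ℂ) ^ (m + 1) /
      (((qnum q (m + 1) : ℂ) - x * (q : ℂ) ^ (m + 1)) *
        ((qnum q (m + 1) : ℂ) - y * (q : ℂ) ^ (m + 1)))) := by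
    have h := hswap.prod
    exact h.congr (fun k => hAB k)
  refine ⟨hL, hR, ?_⟩
  calc (∑' p : {p : ℕ × ℕ // p.2 < p.1 ∧ 0 < p.2},
        (qzeta q p.1.1 : ℂ) * x ^ (p.1.1 - p.1.2 - 1) * y ^ (p.1.2 - 1))
      = ∑' p : ℕ × ℕ, ∑' k : ℕ, Fterm q x y (p, k) := by
        rw [← e.tsum_eq]
        exact tsum_congr hcomp
    _ = ∑' z : (ℕ × ℕ) × ℕ, Fterm q x y z := (Summable.tsum_prod hF).symm
    _ = ∑' z : ℕ × (ℕ × ℕ), Fterm q x y (z.2, z.1) := by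
        rw [← (Equiv.prodComm ℕ (ℕ × ℕ)).tsum_eq (Fterm q x y)]
        rfl
    _ = ∑' k : ℕ, ∑' p : ℕ × ℕ, Fterm q x y (p, k) := Summable.tsum_prod hswap
    _ = _ := tsum_congr hAB
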